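/- Values of K₁, K₂, and the Fisher information for the gamma–Poisson model at γ = 1, λ₀ = 1. In the gamma–Poisson model with shape γ = 1, let Y have the marginal distribution at λ₀ = 1, namely P(Y = y) = 2^{−(y+1)} for y ∈ ℕ (the marginal of Y | X ∼ Poisson(X), X ∼ Exponential(1)), and let μ₁(λ; y) = E_{X ∼ Gamma(1,λ)}[ log( e^{−X} X^{y} / y! ) ], whose derivative in λ is ∂μ₁/∂λ(λ; y) = 1/λ² − y/λ. Then: (a) K₁(λ₀) := Var_Y( ∂μ₁/∂λ(1; Y) ) = Var(Y) = 2; (b) K₂(λ₀) := −E_Y[ ∂²μ₁/∂λ²(1; Y) ] = 1; and (c) the Fisher information of the marginal family p_λ(y) = λ/(1+λ)^{y+1} at λ = 1 is I(1) = Var_Y( (d/dλ) log p_λ(Y)|_{λ=1} ) = 1/2. In particular K₁(λ₀), K₂(λ₀), and I(λ₀) are pairwise distinct. -/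

import Mathlib

open Real

private lemma hsumG : Summable (fun n : ℕ => ((1:ℝ)/2) ^ n) :=
  summable_geometric_of_lt_one (by norm_num) (by norm_num)

private lemma hsumT : Summable (fun n : ℕ => (n:ℝ) * ((1:ℝ)/2) ^ n) := by
  simpa using summable_pow_mul_geometric_of_norm_lt_one (R := ℝ) (r := (1/2:ℝ)) 1 (by
    rw [Real.norm_eq_abs, abs_lt]; constructor <;> norm_num)

private lemma hsumS : Summable (fun n : ℕ => (n:ℝ)^2 * ((1:ℝ)/2) ^ n) := by
  simpa using summable_pow_mul_geometric_of_norm_lt_one (R := ℝ) (r := (1/2:ℝ)) 2 (by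
    rw [Real.norm_eq_abs, abs_lt]; constructor <;> norm_num)

private lemma sumG : ∑' n : ℕ, ((1:ℝ)/2) ^ n = 2 := by
  rw [tsum_geometric_of_lt_one (by norm_num) (by norm_num)]; norm_num

private lemma sumT : ∑' n : ℕ, (n:ℝ) * ((1:ℝ)/2) ^ n = 2 := by
  rw [tsum_coe_mul_geometric_of_norm_lt_one
    (by rw [Real.norm_eq_abs, abs_lt]; constructor <;> norm_num)]
  norm_num

private lemma sumS : ∑' n : ℕ, (n:ℝ)^2 * ((1:ℝ)/2) ^ n = 6 := by
  have key : ∑' n : ℕ, (n:ℝ)^2 * ((1:ℝ)/2) ^ n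
      = ∑' n : ℕ, ((n:ℝ)+1)^2 * ((1:ℝ)/2) ^ (n+1) := by
    rw [Summable.tsum_eq_zero_add hsumS]
    push_cast
    norm_num
  have e : ∀ n : ℕ, ((n:ℝ)+1)^2 * ((1:ℝ)/2) ^ (n+1)
      = (1/2) * ((n:ℝ)^2 * ((1:ℝ)/2)^n) + ((n:ℝ) * ((1:ℝ)/2)^n + (1/2) * ((1:ℝ)/2)^n) := by
    intro n; rw [pow_succ]; ring
  rw [tsum_congr e, Summable.tsum_add (hsumS.mul_left (1/2)) (hsumT.add (hsumG.mul_left (1/2))),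
    Summable.tsum_add hsumT (hsumG.mul_left (1/2)), tsum_mul_left, tsum_mul_left, sumT, sumG] at key
  linarith [key]

/-- Generic weighted sum: `∑ (a n² + b n + c) (1/2)^n = 6a + 2b + 2c`. -/
private lemma comb (a b c : ℝ) :
    ∑' n : ℕ, (a*(n:ℝ)^2 + b*(n:ℝ) + c) * ((1:ℝ)/2) ^ n = 6*a + 2*b + 2*c := by
  have e : ∀ n : ℕ, (a*(n:ℝ)^2 + b*(n:ℝ) + c) * ((1:ℝ)/2) ^ n
      = a * ((n:ℝ)^2 * ((1:ℝ)/2)^n) + (b * ((n:ℝ) * ((1:ℝ)/2)^n) + c * ((1:ℝ)/2)^n) := by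
    intro n; ring
  rw [tsum_congr e, Summable.tsum_add (hsumS.mul_left a) ((hsumT.mul_left b).add (hsumG.mul_left c)),
    Summable.tsum_add (hsumT.mul_left b) (hsumG.mul_left c), tsum_mul_left, tsum_mul_left,
    tsum_mul_left, sumS, sumT, sumG]
  ring

/-- The marginal pmf of `Y` in the gamma–Poisson model with `γ = 1`, `λ₀ = 1`:
`P(Y = y) = 2^{−(y+1)}`. -/
noncomputable def pY (y : ℕ) : ℝ := (1 / 2 : ℝ) ^ (y + 1)

/-- `∂μ₁/∂λ(λ; y) = 1/λ² − y/λ`, the `λ`-derivative of the expected simulated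
log-likelihood of a single observation in the gamma–Poisson model with `γ = 1`. -/
noncomputable def dEsll (lam : ℝ) (y : ℕ) : ℝ := 1 / lam ^ 2 - (y : ℝ) / lam

/-- The log marginal likelihood of the marginal family `p_λ(y) = λ/(1+λ)^{y+1}`. -/
noncomputable def logMarg (lam : ℝ) (y : ℕ) : ℝ := Real.log (lam / (1 + lam) ^ (y + 1))

private lemma derivD (y : ℕ) : deriv (fun lam : ℝ => dEsll lam y) 1 = (y:ℝ) - 2 := by
  have ha : HasDerivAt (fun lam:ℝ => lam^2) 2 1 := by simpa using hasDerivAt_pow 2 (1:ℝ)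
  have hb := (hasDerivAt_const (1:ℝ) (1:ℝ)).fun_div ha (by norm_num)
  have hc := (hasDerivAt_const (1:ℝ) ((y:ℝ))).fun_div (hasDerivAt_id' (1:ℝ)) (by norm_num)
  have h := hb.fun_sub hc
  have h2 : HasDerivAt (fun lam : ℝ => dEsll lam y) ((y:ℝ) - 2) 1 := by
    unfold dEsll
    refine h.congr_deriv ?_
    simp [id]
    ring
  exact h2.deriv

private lemma derivL (y : ℕ) : deriv (fun lam : ℝ => logMarg lam y) 1 = (1 - (y:ℝ)) / 2 := by
  have hl : HasDerivAt (fun lam:ℝ => 1 + lam) 1 1 := by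
    simpa using (hasDerivAt_id (1:ℝ)).const_add (1:ℝ)
  have hh : HasDerivAt (fun lam:ℝ => (1+lam)^(y+1)) (((y:ℝ)+1) * 2^y) 1 := by
    have h0 := hl.fun_pow (y+1)
    refine h0.congr_deriv ?_
    push_cast
    norm_num
  have hf := (hasDerivAt_id' (1:ℝ)).fun_div hh (by show ((1:ℝ)+1)^(y+1) ≠ 0; positivity)
  have hlog := hf.log (by positivity)
  have h2 : HasDerivAt (fun lam : ℝ => logMarg lam y) ((1 - (y:ℝ)) / 2) 1 := by
    unfold logMarg
    refine hlog.congr_deriv ?_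
    have h2y : (2:ℝ)^y ≠ 0 := by positivity
    rw [pow_succ]
    norm_num
    field_simp
    ring
  exact h2.deriv

private lemma dE1 (y : ℕ) : dEsll 1 y = 1 - (y:ℝ) := by simp [dEsll]

private lemma meanD : ∑' z : ℕ, pY z * dEsll 1 z = 0 := by
  have e : ∀ n : ℕ, pY n * dEsll 1 n
      = ((0:ℝ)*(n:ℝ)^2 + (-1/2)*(n:ℝ) + 1/2) * ((1:ℝ)/2) ^ n := by
    intro n; rw [dE1]; simp only [pY]; rw [pow_succ]; ring
  rw [tsum_congr e, comb]; norm_num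

private lemma meanY : ∑' z : ℕ, pY z * (z:ℝ) = 1 := by
  have e : ∀ n : ℕ, pY n * (n:ℝ)
      = ((0:ℝ)*(n:ℝ)^2 + (1/2)*(n:ℝ) + 0) * ((1:ℝ)/2) ^ n := by
    intro n; simp only [pY]; rw [pow_succ]; ring
  rw [tsum_congr e, comb]; norm_num

/-- **Values of `K₁`, `K₂`, and the Fisher information for the gamma–Poisson model at
`γ = 1`, `λ₀ = 1`.**  (a) `K₁(λ₀) = Var_Y(∂μ₁/∂λ(1; Y)) = Var(Y) = 2`;
(b) `K₂(λ₀) = −E_Y[∂²μ₁/∂λ²(1; Y)] = 1`;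
(c) the Fisher information `I(1) = Var_Y((d/dλ) log p_λ(Y)|_{λ=1}) = 1/2`.
In particular `K₁(λ₀)`, `K₂(λ₀)` and `I(λ₀)` are pairwise distinct. -/
theorem gamma_poisson_K1_K2_fisher :
    -- (a)  K₁(1) = Var_Y(∂μ₁/∂λ(1; Y)) = Var(Y) = 2
    (∑' y : ℕ, pY y * (dEsll 1 y - ∑' z : ℕ, pY z * dEsll 1 z) ^ 2
        = ∑' y : ℕ, pY y * ((y : ℝ) - ∑' z : ℕ, pY z * (z : ℝ)) ^ 2) ∧
    (∑' y : ℕ, pY y * (dEsll 1 y - ∑' z : ℕ, pY z * dEsll 1 z) ^ 2 = 2) ∧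
    -- (b)  K₂(1) = −E_Y[∂²μ₁/∂λ²(1; Y)] = 1
    (-(∑' y : ℕ, pY y * deriv (fun lam : ℝ => dEsll lam y) 1) = 1) ∧
    -- (c)  Fisher information of the marginal family at λ = 1 equals 1/2
    (∑' y : ℕ, pY y *
        (deriv (fun lam : ℝ => logMarg lam y) 1
          - ∑' z : ℕ, pY z * deriv (fun lam : ℝ => logMarg lam z) 1) ^ 2 = 1 / 2) ∧
    -- pairwise distinct
    ((2 : ℝ) ≠ 1 ∧ (2 : ℝ) ≠ 1 / 2 ∧ (1 : ℝ) ≠ 1 / 2) := by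
  have hK1 : ∑' y : ℕ, pY y * (dEsll 1 y - ∑' z : ℕ, pY z * dEsll 1 z) ^ 2 = 2 := by
    rw [meanD]
    have e : ∀ n : ℕ, pY n * (dEsll 1 n - 0) ^ 2
        = ((1/2:ℝ)*(n:ℝ)^2 + (-1)*(n:ℝ) + 1/2) * ((1:ℝ)/2) ^ n := by
      intro n; rw [dE1]; simp only [pY]; rw [pow_succ]; ring
    rw [tsum_congr e, comb]; norm_num
  have hVarY : ∑' y : ℕ, pY y * ((y : ℝ) - ∑' z : ℕ, pY z * (z : ℝ)) ^ 2 = 2 := by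
    rw [meanY]
    have e : ∀ n : ℕ, pY n * ((n:ℝ) - 1) ^ 2
        = ((1/2:ℝ)*(n:ℝ)^2 + (-1)*(n:ℝ) + 1/2) * ((1:ℝ)/2) ^ n := by
      intro n; simp only [pY]; rw [pow_succ]; ring
    rw [tsum_congr e, comb]; norm_num
  have hK2 : -(∑' y : ℕ, pY y * deriv (fun lam : ℝ => dEsll lam y) 1) = 1 := by
    have e : ∀ n : ℕ, pY n * deriv (fun lam : ℝ => dEsll lam n) 1
        = ((0:ℝ)*(n:ℝ)^2 + (1/2)*(n:ℝ) + (-1)) * ((1:ℝ)/2) ^ n := by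
      intro n; rw [derivD]; simp only [pY]; rw [pow_succ]; ring
    rw [tsum_congr e, comb]; norm_num
  have hmeanL : ∑' z : ℕ, pY z * deriv (fun lam : ℝ => logMarg lam z) 1 = 0 := by
    have e : ∀ n : ℕ, pY n * deriv (fun lam : ℝ => logMarg lam n) 1
        = ((0:ℝ)*(n:ℝ)^2 + (-1/4)*(n:ℝ) + 1/4) * ((1:ℝ)/2) ^ n := by
      intro n; rw [derivL]; simp only [pY]; rw [pow_succ]; ring
    rw [tsum_congr e, comb]; norm_num
  have hFisher : ∑' y : ℕ, pY y *
      (deriv (fun lam : ℝ => logMarg lam y) 1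
        - ∑' z : ℕ, pY z * deriv (fun lam : ℝ => logMarg lam z) 1) ^ 2 = 1 / 2 := by
    rw [hmeanL]
    have e : ∀ n : ℕ, pY n * (deriv (fun lam : ℝ => logMarg lam n) 1 - 0) ^ 2
        = ((1/8:ℝ)*(n:ℝ)^2 + (-1/4)*(n:ℝ) + 1/8) * ((1:ℝ)/2) ^ n := by
      intro n; rw [derivL]; simp only [pY]; rw [pow_succ]; ring
    rw [tsum_congr e, comb]; norm_num
  exact ⟨hK1.trans hVarY.symm, hK1, hK2, hFisher, by norm_num, by norm_num, by norm_num⟩
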